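/- Let G be a finite group with trivial center, let m ≥ 6 and 3 ≤ n ≤ m−3, and let C1,…,Cm be nontrivial conjugacy classes of G. Then l^i(C1,…,Cm) ≥ |G| · l^i(C1,…,Cn) · l^i(C_{n+1},…,Cm). -/

import Mathlib

namespace ClassVectors

variable {G : Type*} [Group G]

/-- Simultaneous conjugacy of `m`-tuples. -/
def SimConjT {G : Type*} [Group G] {m : ℕ} (σ τ : Fin m → G) : Prop :=
  ∃ γ : G, ∀ i, γ⁻¹ * σ i * γ = τ i

/-- `C` is a nontrivial conjugacy class of `G`. -/
def IsNontrivialConjClass {G : Type*} [Group G] (C : Set G) : Prop :=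
  ∃ g : G, g ≠ 1 ∧ C = {x | IsConj g x}

/-- `Σ(C₁,…,C_m)`: the set of `m`-tuples with `σᵢ ∈ Cᵢ`, product `1`
(in order `σ₀ σ₁ ⋯ σ_{m-1}`), generating `G`. -/
def GenSystems (G : Type*) [Group G] (m : ℕ) (C : Fin m → Set G) :
    Set (Fin m → G) :=
  {σ | (∀ i, σ i ∈ C i) ∧ (List.ofFn σ).prod = 1 ∧
    Subgroup.closure (Set.range σ) = ⊤}

/-- `l^i(C₁,…,C_m)`: the number of simultaneous conjugacy classes of
generating systems in `Σ(C₁,…,C_m)`. -/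
noncomputable def li (G : Type*) [Group G] (m : ℕ) (C : Fin m → Set G) : ℕ :=
  Nat.card (Quot (fun σ τ : GenSystems G m C => SimConjT σ.1 τ.1))

end ClassVectors

open ClassVectors

section Aux

variable {G : Type*} [Group G]

lemma aux_conj_mem {C : Set G} (hC : IsNontrivialConjClass C) {x : G} (hx : x ∈ C) (g : G) :
    g * x * g⁻¹ ∈ C := by
  obtain ⟨a, -, rfl⟩ := hC
  exact hx.trans (isConj_iff.mpr ⟨g, rfl⟩)

lemma aux_simconj_equiv {m : ℕ} :
    Equivalence (fun σ τ : Fin m → G => SimConjT σ τ) := by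
  constructor
  · intro σ; exact ⟨1, fun i => by group⟩
  · rintro σ τ ⟨γ, hγ⟩
    exact ⟨γ⁻¹, fun i => by rw [← hγ i]; group⟩
  · rintro σ τ ρ ⟨γ, hγ⟩ ⟨δ, hδ⟩
    exact ⟨γ * δ, fun i => by rw [← hδ i, ← hγ i]; group⟩

lemma aux_eq_one_of_commute (hZ : Subgroup.center G = ⊥) {s : Set G}
    (hs : Subgroup.closure s = ⊤) {γ : G} (h : ∀ x ∈ s, γ * x = x * γ) : γ = 1 := by
  have hall : ∀ x : G, x * γ = γ * x := by
    intro x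
    have hx : x ∈ Subgroup.closure s := hs ▸ Subgroup.mem_top x
    induction hx using Subgroup.closure_induction with
    | mem y hy => exact (h y hy).symm
    | one => simp
    | mul y z hy hz ihy ihz => rw [mul_assoc, ihz, ← mul_assoc, ihy, mul_assoc]
    | inv y hy ihy =>
        have := congrArg (fun t => y⁻¹ * t * y⁻¹) ihy
        simpa [mul_assoc] using this.symm
  have : γ ∈ Subgroup.center G := Subgroup.mem_center_iff.mpr hall
  rw [hZ, Subgroup.mem_bot] at this
  exact this

variable {m n : ℕ}

/-- Combined tuple: `σ` followed by the conjugate of `τ` by `g`. -/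
def aux_combine (h : n + (m - n) = m) (g : G) (σ : Fin n → G) (τ : Fin (m - n) → G) :
    Fin m → G :=
  (Fin.append σ fun j => g * τ j * g⁻¹) ∘ Fin.cast h.symm

lemma aux_combine_castLE (h : n + (m - n) = m) (hle : n ≤ m) (g : G)
    (σ : Fin n → G) (τ : Fin (m - n) → G) (j : Fin n) :
    aux_combine h g σ τ (Fin.castLE hle j) = σ j := by
  have hc : Fin.cast h.symm (Fin.castLE hle j) = Fin.castAdd (m - n) j := rfl
  show (Fin.append σ fun j => g * τ j * g⁻¹) (Fin.cast h.symm (Fin.castLE hle j)) = σ j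
  rw [hc, Fin.append_left]

lemma aux_combine_natAdd (h : n + (m - n) = m) (g : G)
    (σ : Fin n → G) (τ : Fin (m - n) → G) (j : Fin (m - n)) :
    aux_combine h g σ τ (Fin.cast h (Fin.natAdd n j)) = g * τ j * g⁻¹ := by
  have hc : Fin.cast h.symm (Fin.cast h (Fin.natAdd n j)) = Fin.natAdd n j := rfl
  show (Fin.append σ fun j => g * τ j * g⁻¹) _ = _
  rw [hc, Fin.append_right]

lemma aux_combine_ofFn (h : n + (m - n) = m) (g : G)
    (σ : Fin n → G) (τ : Fin (m - n) → G) :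
    List.ofFn (aux_combine h g σ τ)
      = List.ofFn (Fin.append σ fun j => g * τ j * g⁻¹) := by
  apply List.ext_getElem
  · simp [h]
  · intro i h1 h2
    simp only [List.getElem_ofFn]
    rfl

lemma aux_combine_mem (h : n + (m - n) = m) (hle : n ≤ m) (g : G)
    {C : Fin m → Set G} (hC : ∀ i, IsNontrivialConjClass (C i))
    {σ : Fin n → G} {τ : Fin (m - n) → G}
    (hσ : ∀ j, σ j ∈ C (Fin.castLE hle j))
    (hτ : ∀ j, τ j ∈ C (Fin.cast h (Fin.natAdd n j))) :
    ∀ i, aux_combine h g σ τ i ∈ C i := by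
  intro i
  by_cases hi : i.1 < n
  · have hieq : i = Fin.castLE hle ⟨i.1, hi⟩ := Fin.ext rfl
    rw [hieq, aux_combine_castLE]
    exact hσ _
  · have hj : n + (i.1 - n) = i.1 := by omega
    have hjlt : i.1 - n < m - n := by omega
    have hieq : i = Fin.cast h (Fin.natAdd n ⟨i.1 - n, hjlt⟩) := Fin.ext (by simp [hj])
    rw [hieq, aux_combine_natAdd]
    exact aux_conj_mem (hC _) (hτ _) g

lemma aux_combine_prod (h : n + (m - n) = m) (g : G)
    {σ : Fin n → G} {τ : Fin (m - n) → G}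
    (hσ : (List.ofFn σ).prod = 1) (hτ : (List.ofFn τ).prod = 1) :
    (List.ofFn (aux_combine h g σ τ)).prod = 1 := by
  rw [aux_combine_ofFn, List.ofFn_add, List.prod_append]
  have h1 : (List.ofFn fun i : Fin n => Fin.append σ (fun j => g * τ j * g⁻¹) (Fin.castAdd _ i))
      = List.ofFn σ := by
    simp [Fin.append_left]
  have h2 : (List.ofFn fun j : Fin (m - n) =>
        Fin.append σ (fun j => g * τ j * g⁻¹) (Fin.natAdd _ j))
      = List.ofFn fun j => g * τ j * g⁻¹ := by
    simp [Fin.append_right]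
  rw [show (List.ofFn fun i : Fin n => Fin.append σ (fun j => g * τ j * g⁻¹) (Fin.castLE (by omega) i)) = List.ofFn σ from h1, h2, hσ, one_mul]
  have : (List.ofFn fun j => g * τ j * g⁻¹)
      = List.map (⇑(MulAut.conj g).toMonoidHom) (List.ofFn τ) := by
    rw [List.map_ofFn]; rfl
  rw [this, ← map_list_prod (MulAut.conj g).toMonoidHom, hτ]
  simp

lemma aux_combine_closure (h : n + (m - n) = m) (hle : n ≤ m) (g : G)
    {σ : Fin n → G} (τ : Fin (m - n) → G)
    (hσ : Subgroup.closure (Set.range σ) = ⊤) :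
    Subgroup.closure (Set.range (aux_combine h g σ τ)) = ⊤ := by
  apply top_unique
  rw [← hσ]
  apply Subgroup.closure_mono
  rintro x ⟨j, rfl⟩
  exact ⟨Fin.castLE hle j, aux_combine_castLE h hle g σ τ j⟩

end Aux

open ClassVectors in
/-- Proposition (lower bound for `l^i`): for a finite centerless group `G`,
`m ≥ 6`, `3 ≤ n ≤ m − 3`, and nontrivial conjugacy classes `C₁,…,C_m`,
`l^i(C₁,…,C_m) ≥ |G| · l^i(C₁,…,C_n) · l^i(C_{n+1},…,C_m)`. -/
theorem statement18 {G : Type*} [Group G] [Finite G]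
    (hZ : Subgroup.center G = ⊥)
    (m n : ℕ) (hm : 6 ≤ m) (hn : 3 ≤ n) (hnm : n ≤ m - 3)
    (C : Fin m → Set G) (hC : ∀ i, IsNontrivialConjClass (C i)) :
    Nat.card G * li G n (fun i => C (Fin.castLE (by omega) i)) *
      li G (m - n) (fun i => C (Fin.cast (by omega) (Fin.natAdd n i))) ≤
    li G m C := by
  classical
  have hle : n ≤ m := by omega
  have hadd : n + (m - n) = m := by omega
  set C1 : Fin n → Set G := fun i => C (Fin.castLE (by omega) i) with hC1
  set C2 : Fin (m - n) → Set G := fun i => C (Fin.cast (by omega) (Fin.natAdd n i)) with hC2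
  set r1 : GenSystems G n C1 → GenSystems G n C1 → Prop :=
    fun σ τ => SimConjT σ.1 τ.1 with hr1
  set r2 : GenSystems G (m - n) C2 → GenSystems G (m - n) C2 → Prop :=
    fun σ τ => SimConjT σ.1 τ.1 with hr2
  set rm : GenSystems G m C → GenSystems G m C → Prop :=
    fun σ τ => SimConjT σ.1 τ.1 with hrm
  -- the combined generating system
  have key : ∀ (g : G) (σ : GenSystems G n C1) (τ : GenSystems G (m - n) C2),
      aux_combine hadd g σ.1 τ.1 ∈ GenSystems G m C := by
    rintro g ⟨σ, hσ1, hσ2, hσ3⟩ ⟨τ, hτ1, hτ2, hτ3⟩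
    exact ⟨aux_combine_mem hadd hle g hC hσ1 hτ1, aux_combine_prod hadd g hσ2 hτ2,
      aux_combine_closure hadd hle g τ hσ3⟩
  set F : G × Quot r1 × Quot r2 → Quot rm :=
    fun p => Quot.mk rm ⟨aux_combine hadd p.1 p.2.1.out.1 p.2.2.out.1,
      key p.1 p.2.1.out p.2.2.out⟩ with hF
  have hrm_equiv : Equivalence rm := by
    constructor
    · intro σ; exact aux_simconj_equiv.refl σ.1
    · intro σ τ h; exact aux_simconj_equiv.symm h
    · intro σ τ ρ h h'; exact aux_simconj_equiv.trans h h'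
  have hinj : Function.Injective F := by
    rintro ⟨g, q1, q2⟩ ⟨g', q1', q2'⟩ heq
    have hrel : rm ⟨aux_combine hadd g q1.out.1 q2.out.1, key g q1.out q2.out⟩
        ⟨aux_combine hadd g' q1'.out.1 q2'.out.1, key g' q1'.out q2'.out⟩ :=
      (hrm_equiv.eqvGen_iff).mp (Quot.eq.mp heq)
    obtain ⟨γ, hγ₀⟩ := hrel
    have hγ : ∀ i, γ⁻¹ * aux_combine hadd g q1.out.1 q2.out.1 i * γ
        = aux_combine hadd g' q1'.out.1 q2'.out.1 i := hγ₀
    -- first halves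
    have hσ : ∀ j : Fin n, γ⁻¹ * q1.out.1 j * γ = q1'.out.1 j := by
      intro j
      have := hγ (Fin.castLE hle j)
      rwa [aux_combine_castLE hadd hle, aux_combine_castLE hadd hle] at this
    have hq1 : q1 = q1' := by
      have : Quot.mk r1 q1.out = Quot.mk r1 q1'.out := Quot.sound ⟨γ, hσ⟩
      rwa [Quot.out_eq, Quot.out_eq] at this
    subst hq1
    -- γ centralizes the range of q1.out, hence γ = 1
    have hγ1 : γ = 1 := by
      apply aux_eq_one_of_commute hZ q1.out.2.2.2
      rintro x ⟨j, rfl⟩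
      have := hσ j
      have h2 : q1.out.1 j * γ = γ * q1.out.1 j := by
        calc q1.out.1 j * γ = γ * (γ⁻¹ * q1.out.1 j * γ) := by group
          _ = γ * q1.out.1 j := by rw [this]
      exact h2.symm
    subst hγ1
    simp only [inv_one, one_mul, mul_one] at hγ
    -- second halves
    have hτ : ∀ j : Fin (m - n),
        g * q2.out.1 j * g⁻¹ = g' * q2'.out.1 j * g'⁻¹ := by
      intro j
      have := hγ (Fin.cast hadd (Fin.natAdd n j))
      rwa [aux_combine_natAdd hadd, aux_combine_natAdd hadd] at this
    have hτ' : ∀ j, (g⁻¹ * g')⁻¹ * q2.out.1 j * (g⁻¹ * g') = q2'.out.1 j := by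
      intro j
      have := hτ j
      calc (g⁻¹ * g')⁻¹ * q2.out.1 j * (g⁻¹ * g')
          = g'⁻¹ * (g * q2.out.1 j * g⁻¹) * g' := by group
        _ = g'⁻¹ * (g' * q2'.out.1 j * g'⁻¹) * g' := by rw [this]
        _ = q2'.out.1 j := by group
    have hq2 : q2 = q2' := by
      have : Quot.mk r2 q2.out = Quot.mk r2 q2'.out := Quot.sound ⟨g⁻¹ * g', hτ'⟩
      rwa [Quot.out_eq, Quot.out_eq] at this
    subst hq2
    -- g = g'
    have hδ : g⁻¹ * g' = 1 := by
      apply aux_eq_one_of_commute hZ q2.out.2.2.2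
      rintro x ⟨j, rfl⟩
      have hx := hτ' j
      have h2 : q2.out.1 j * (g⁻¹ * g')
          = (g⁻¹ * g') * ((g⁻¹ * g')⁻¹ * q2.out.1 j * (g⁻¹ * g')) := by group
      rw [hx] at h2
      exact h2.symm
    have hg : g = g' := by rwa [inv_mul_eq_one] at hδ
    rw [hg]
  have hcard := Nat.card_le_card_of_injective F hinj
  calc Nat.card G * li G n C1 * li G (m - n) C2
      = Nat.card (G × Quot r1 × Quot r2) := by
        rw [Nat.card_prod, Nat.card_prod, li, li, mul_assoc]
    _ ≤ Nat.card (Quot rm) := hcard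
    _ = li G m C := rfl
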